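/- For the one-edge lace contribution one has, for all m ≥ 2 and x ∈ ℤ^d, Π_m^{(1)}(x) ≤ δ_{0,x}·2d·(D*C_{m−1})(0), where D is the uniform nearest-neighbour step distribution and C_{m−1} the weakly self-avoiding walk connectivity. -/

import Mathlib

open scoped Classical

/-- The unit step of the nearest-neighbour walk encoded by a coordinate and a sign. -/
def dirStep (d : ℕ) (p : Fin d × Bool) : Fin d → ℤ :=
  fun i => if i = p.1 then (if p.2 then 1 else -1) else 0

/-- Position after `k` steps of the path encoded by the step sequence `σ`. -/
def pathPos {d n : ℕ} (σ : Fin n → Fin d × Bool) (k : ℕ) : Fin d → ℤ :=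
  ∑ j : Fin n, if (j : ℕ) < k then dirStep d (σ j) else 0

/-- Intersection indicator `U_{st}(ω)`. -/
noncomputable def Uind {d n : ℕ} (σ : Fin n → Fin d × Bool) (s t : ℕ) : ℝ :=
  if pathPos σ s = pathPos σ t then 1 else 0

/-- The connectivity `C_n(x)` of the weakly self-avoiding walk with parameter `λ`. -/
noncomputable def Conn (d : ℕ) (lam : ℝ) (n : ℕ) (x : Fin d → ℤ) : ℝ :=
  ∑ σ : Fin n → Fin d × Bool,
    if pathPos σ n = x then
      ∏ s ∈ Finset.range (n + 1), ∏ t ∈ Finset.Ioc s n, (1 - lam * Uind σ s t)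
    else 0

/-- The one-edge lace contribution
`Π_m^{(1)}(x) = ∑_{ω:0→x,|ω|=m} U_{0m}(ω) ∏_{0≤s<t≤m, st≠0m} (1 - λU_{st}(ω))`. -/
noncomputable def PiOne (d : ℕ) (lam : ℝ) (m : ℕ) (x : Fin d → ℤ) : ℝ :=
  ∑ σ : Fin m → Fin d × Bool,
    if pathPos σ m = x then
      Uind σ 0 m *
        ∏ s ∈ Finset.range (m + 1), ∏ t ∈ Finset.Ioc s m,
          (if (s, t) = (0, m) then 1 else 1 - lam * Uind σ s t)
    else 0

lemma pathPos_zero {d n : ℕ} (σ : Fin n → Fin d × Bool) : pathPos σ 0 = 0 := by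
  simp [pathPos]

lemma pathPos_cons {d n : ℕ} (p : Fin d × Bool) (σ : Fin n → Fin d × Bool) (s : ℕ) :
    pathPos (Fin.cons p σ) (s + 1) = dirStep d p + pathPos σ s := by
  unfold pathPos
  rw [Fin.sum_univ_succ]
  simp [Nat.succ_lt_succ_iff]

lemma Uind_cons {d n : ℕ} (p : Fin d × Bool) (σ : Fin n → Fin d × Bool) (s t : ℕ) :
    Uind (Fin.cons p σ) (s + 1) (t + 1) = Uind σ s t := by
  simp [Uind, pathPos_cons]

lemma Uind_nonneg {d n : ℕ} (σ : Fin n → Fin d × Bool) (s t : ℕ) : 0 ≤ Uind σ s t := by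
  unfold Uind; split <;> norm_num

lemma Uind_le_one {d n : ℕ} (σ : Fin n → Fin d × Bool) (s t : ℕ) : Uind σ s t ≤ 1 := by
  unfold Uind; split <;> norm_num

lemma factor_nonneg {d n : ℕ} {lam : ℝ} (h0 : 0 ≤ lam) (h1 : lam ≤ 1)
    (σ : Fin n → Fin d × Bool) (s t : ℕ) : 0 ≤ 1 - lam * Uind σ s t := by
  have := Uind_nonneg σ s t
  have := Uind_le_one σ s t
  nlinarith

lemma factor_le_one {d n : ℕ} {lam : ℝ} (h0 : 0 ≤ lam)
    (σ : Fin n → Fin d × Bool) (s t : ℕ) : 1 - lam * Uind σ s t ≤ 1 := by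
  have := Uind_nonneg σ s t
  nlinarith

/-- `Π_m^{(1)}(x) ≤ δ_{0,x} · 2d · (D * C_{m-1})(0)`, where
`2d (D*C_{m-1})(0) = ∑_{|y|=1} C_{m-1}(-y)`. -/
theorem pi_one_bound (d : ℕ) (hd : 1 ≤ d) (lam : ℝ) (h0 : 0 ≤ lam) (h1 : lam ≤ 1)
    (m : ℕ) (hm : 2 ≤ m) (x : Fin d → ℤ) :
    PiOne d lam m x ≤
      (if x = 0 then 1 else 0) *
        ∑ p : Fin d × Bool, Conn d lam (m - 1) (-(dirStep d p)) := by
  obtain ⟨k, rfl⟩ : ∃ k, m = k + 2 := ⟨m - 2, by omega⟩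
  have hm1 : k + 2 - 1 = k + 1 := rfl
  rw [hm1]
  by_cases hx : x = 0
  · subst hx
    rw [if_pos rfl, one_mul, PiOne]
    rw [← Equiv.sum_comp (Fin.consEquiv fun _ => (Fin d × Bool)), Fintype.sum_prod_type]
    apply Finset.sum_le_sum
    intro p _
    rw [Conn]
    apply Finset.sum_le_sum
    intro σ _
    have he : (Fin.consEquiv fun _ => (Fin d × Bool)) (p, σ) = Fin.cons p σ := rfl
    rw [he]
    set τ : Fin (k + 2) → Fin d × Bool := Fin.cons p σ with hτ
    -- nonnegativity of the RHS summand
    have hQ : 0 ≤ ∏ s ∈ Finset.range (k + 1 + 1), ∏ t ∈ Finset.Ioc s (k + 1),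
        (1 - lam * Uind σ s t) :=
      Finset.prod_nonneg fun s _ => Finset.prod_nonneg fun t _ => factor_nonneg h0 h1 σ s t
    by_cases hend : pathPos τ (k + 2) = 0
    · have hend' : pathPos σ (k + 1) = -(dirStep d p) := by
        have := pathPos_cons p σ (k + 1)
        rw [hτ] at *
        have h2 : dirStep d p + pathPos σ (k + 1) = 0 := by rw [← this]; exact hend
        linear_combination (norm := abel) h2
      rw [if_pos hend, if_pos hend']
      -- bound the product
      have hfac : ∀ s t : ℕ, 0 ≤ (if (s, t) = (0, k + 2) then (1:ℝ) else 1 - lam * Uind τ s t) ∧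
          (if (s, t) = (0, k + 2) then (1:ℝ) else 1 - lam * Uind τ s t) ≤ 1 := by
        intro s t
        split
        · exact ⟨zero_le_one, le_refl 1⟩
        · exact ⟨factor_nonneg h0 h1 τ s t, factor_le_one h0 τ s t⟩
      have hPnn : ∀ s : ℕ, 0 ≤ ∏ t ∈ Finset.Ioc s (k + 2),
          (if (s, t) = (0, k + 2) then (1:ℝ) else 1 - lam * Uind τ s t) :=
        fun s => Finset.prod_nonneg fun t _ => (hfac s t).1
      calc Uind τ 0 (k + 2) * ∏ s ∈ Finset.range (k + 2 + 1), ∏ t ∈ Finset.Ioc s (k + 2),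
              (if (s, t) = (0, k + 2) then (1:ℝ) else 1 - lam * Uind τ s t)
          ≤ 1 * ∏ s ∈ Finset.range (k + 2 + 1), ∏ t ∈ Finset.Ioc s (k + 2),
              (if (s, t) = (0, k + 2) then (1:ℝ) else 1 - lam * Uind τ s t) := by
            apply mul_le_mul_of_nonneg_right (Uind_le_one τ 0 (k + 2))
            exact Finset.prod_nonneg fun s _ => hPnn s
        _ = (∏ s ∈ Finset.range (k + 2), ∏ t ∈ Finset.Ioc (s + 1) (k + 2),
              (if (s + 1, t) = (0, k + 2) then (1:ℝ) else 1 - lam * Uind τ (s + 1) t)) *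
            ∏ t ∈ Finset.Ioc 0 (k + 2),
              (if ((0:ℕ), t) = (0, k + 2) then (1:ℝ) else 1 - lam * Uind τ 0 t) := by
            rw [one_mul, Finset.prod_range_succ']
        _ ≤ (∏ s ∈ Finset.range (k + 2), ∏ t ∈ Finset.Ioc (s + 1) (k + 2),
              (if (s + 1, t) = (0, k + 2) then (1:ℝ) else 1 - lam * Uind τ (s + 1) t)) * 1 := by
            apply mul_le_mul_of_nonneg_left
            · exact Finset.prod_le_one (fun t _ => (hfac 0 t).1) (fun t _ => (hfac 0 t).2)
            · exact Finset.prod_nonneg fun s _ =>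
                Finset.prod_nonneg fun t _ => (hfac (s + 1) t).1
        _ = ∏ s ∈ Finset.range (k + 1 + 1), ∏ t ∈ Finset.Ioc s (k + 1),
              (1 - lam * Uind σ s t) := by
            rw [mul_one]
            apply Finset.prod_congr rfl
            intro s _
            have hmap : (Finset.Ioc s (k + 1)).map (addRightEmbedding 1)
                = Finset.Ioc (s + 1) (k + 2) := by
              rw [Finset.map_add_right_Ioc]
            rw [← hmap, Finset.prod_map]
            apply Finset.prod_congr rfl
            intro t _
            have : (s + 1, addRightEmbedding 1 t) ≠ ((0:ℕ), k + 2) := by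
              intro hc
              exact Nat.succ_ne_zero s (congrArg Prod.fst hc)
            rw [if_neg this]
            show (1:ℝ) - lam * Uind τ (s + 1) (t + 1) = 1 - lam * Uind σ s t
            rw [hτ, Uind_cons]
    · rw [if_neg hend]
      split
      · exact hQ
      · exact le_refl 0
  · rw [if_neg hx, zero_mul]
    apply le_of_eq
    rw [PiOne]
    apply Finset.sum_eq_zero
    intro σ _
    split_ifs with h
    · rw [Uind, if_neg, zero_mul]
      rw [pathPos_zero, h]
      exact fun hc => hx hc.symm
    · rfl
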